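/- Let S = {(v,w) ∈ ℕ² : 0 ≤ v,w ≤ 3} \ {(2,3),(3,2),(3,3)} index the degree-3 approximate Euclidean order basis (13 modes) on the reference quadrilateral. Let M be the diagonal real S×S matrix with M_{(v,w),(v,w)} = 4/((2v+1)(2w+1)). For real parameters q0, q1, q2, let Q be the symmetric S×S matrix whose only nonzero entries (listing one entry of each symmetric pair) are Q_{(1,3),(1,3)} = Q_{(3,1),(3,1)} = q0, Q_{(1,3),(3,1)} = q2, and Q_{(2,2),(2,2)} = q1. Then M + Q is positive definite if and only if 21·q0 > −4, 25·q1 > −4, and 21·q0·(21·q0 + 8) − 441·q2² + 16 > 0. -/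

import Mathlib

/-- The index set of the degree-3 approximate Euclidean order basis (13 modes):
modes `(v,w)` with `0 ≤ v,w ≤ 3` excluding `(2,3)`, `(3,2)` and `(3,3)`. -/
def AE3 : Type := {p : Fin 4 × Fin 4 // p ≠ (2, 3) ∧ p ≠ (3, 2) ∧ p ≠ (3, 3)}

instance : Fintype AE3 := Subtype.fintype _
instance : DecidableEq AE3 := Subtype.instDecidableEq

/-- Modal mass matrix of the degree-3 approximate Euclidean order Legendre basis:
`M_{(v,w),(v,w)} = 4/((2v+1)(2w+1))`. -/
noncomputable def massAE3 : Matrix AE3 AE3 ℝ :=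
  Matrix.diagonal fun p =>
    (4 : ℝ) / (((2 * (p.val.1 : ℕ) + 1) * (2 * (p.val.2 : ℕ) + 1) : ℕ) : ℝ)

/-- The symmetric filter matrix `Q(q0, q1, q2)` for the degree-3 approximate Euclidean
order basis. -/
def filterAE3 (q0 q1 q2 : ℝ) : Matrix AE3 AE3 ℝ :=
  fun i j =>
    if (i.val = (1, 3) ∧ j.val = (1, 3)) ∨ (i.val = (3, 1) ∧ j.val = (3, 1)) then q0
    else if (i.val = (1, 3) ∧ j.val = (3, 1)) ∨ (i.val = (3, 1) ∧ j.val = (1, 3)) then q2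
    else if i.val = (2, 2) ∧ j.val = (2, 2) then q1
    else 0

open Matrix Finset

def aaAE : AE3 := ⟨(1,3), by decide⟩
def bbAE : AE3 := ⟨(3,1), by decide⟩
def ccAE : AE3 := ⟨(2,2), by decide⟩

noncomputable def ddAE : AE3 → ℝ := fun p =>
  (4 : ℝ) / (((2 * (p.val.1 : ℕ) + 1) * (2 * (p.val.2 : ℕ) + 1) : ℕ) : ℝ)

lemma massAE3_eq : massAE3 = Matrix.diagonal ddAE := rfl

lemma ddAE_pos (p : AE3) : 0 < ddAE p := by
  unfold ddAE
  apply div_pos (by norm_num)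
  exact_mod_cast Nat.pos_of_ne_zero (by positivity)

lemma ddAE_aa : ddAE aaAE = 4 / 21 := by
  show (4:ℝ) / ((21 : ℕ) : ℝ) = 4/21
  norm_num

lemma ddAE_bb : ddAE bbAE = 4 / 21 := by
  show (4:ℝ) / ((21 : ℕ) : ℝ) = 4/21
  norm_num

lemma ddAE_cc : ddAE ccAE = 4 / 25 := by
  show (4:ℝ) / ((25 : ℕ) : ℝ) = 4/25
  norm_num

def restAE : Finset AE3 := ((Finset.univ.erase aaAE).erase bbAE).erase ccAE

lemma sum_split3 (f : AE3 → ℝ) :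
    ∑ i, f i = f aaAE + f bbAE + f ccAE + ∑ i ∈ restAE, f i := by
  have h1 : bbAE ∈ Finset.univ.erase aaAE :=
    Finset.mem_erase.mpr ⟨by decide, Finset.mem_univ _⟩
  have h2 : ccAE ∈ (Finset.univ.erase aaAE).erase bbAE :=
    Finset.mem_erase.mpr ⟨by decide, Finset.mem_erase.mpr ⟨by decide, Finset.mem_univ _⟩⟩
  rw [← Finset.add_sum_erase _ f (Finset.mem_univ aaAE),
      ← Finset.add_sum_erase _ f h1, ← Finset.add_sum_erase _ f h2]
  unfold restAE
  ring

lemma mem_restAE {i : AE3} (h : i ∈ restAE) : i ≠ aaAE ∧ i ≠ bbAE ∧ i ≠ ccAE := by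
  simp only [restAE, Finset.mem_erase] at h
  exact ⟨h.2.2.1, h.2.1, h.1⟩

lemma rowQ_aa (q0 q1 q2 : ℝ) (x : AE3 → ℝ) :
    (filterAE3 q0 q1 q2 *ᵥ x) aaAE = q0 * x aaAE + q2 * x bbAE := by
  show ∑ j, filterAE3 q0 q1 q2 aaAE j * x j = _
  rw [sum_split3]
  have : ∑ i ∈ restAE, filterAE3 q0 q1 q2 aaAE i * x i = 0 := by
    apply Finset.sum_eq_zero
    intro j hj
    obtain ⟨h1, h2, -⟩ := mem_restAE hj
    have h1' : j.val ≠ ((1:Fin 4),(3:Fin 4)) := fun h => h1 (Subtype.ext h)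
    have h2' : j.val ≠ ((3:Fin 4),(1:Fin 4)) := fun h => h2 (Subtype.ext h)
    simp [filterAE3, h1', h2', aaAE]
  rw [this]
  show q0 * x aaAE + q2 * x bbAE + (0:ℝ) * x ccAE + 0 = _
  ring

lemma rowQ_bb (q0 q1 q2 : ℝ) (x : AE3 → ℝ) :
    (filterAE3 q0 q1 q2 *ᵥ x) bbAE = q2 * x aaAE + q0 * x bbAE := by
  show ∑ j, filterAE3 q0 q1 q2 bbAE j * x j = _
  rw [sum_split3]
  have : ∑ i ∈ restAE, filterAE3 q0 q1 q2 bbAE i * x i = 0 := by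
    apply Finset.sum_eq_zero
    intro j hj
    obtain ⟨h1, h2, -⟩ := mem_restAE hj
    have h1' : j.val ≠ ((1:Fin 4),(3:Fin 4)) := fun h => h1 (Subtype.ext h)
    have h2' : j.val ≠ ((3:Fin 4),(1:Fin 4)) := fun h => h2 (Subtype.ext h)
    simp [filterAE3, h1', h2', bbAE]
  rw [this]
  show q2 * x aaAE + q0 * x bbAE + (0:ℝ) * x ccAE + 0 = _
  ring

lemma rowQ_cc (q0 q1 q2 : ℝ) (x : AE3 → ℝ) :
    (filterAE3 q0 q1 q2 *ᵥ x) ccAE = q1 * x ccAE := by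
  show ∑ j, filterAE3 q0 q1 q2 ccAE j * x j = _
  rw [sum_split3]
  have : ∑ i ∈ restAE, filterAE3 q0 q1 q2 ccAE i * x i = 0 := by
    apply Finset.sum_eq_zero
    intro j hj
    obtain ⟨-, -, h3⟩ := mem_restAE hj
    have h3' : j.val ≠ ((2:Fin 4),(2:Fin 4)) := fun h => h3 (Subtype.ext h)
    simp [filterAE3, h3', ccAE]
  rw [this]
  show (0:ℝ) * x aaAE + (0:ℝ) * x bbAE + q1 * x ccAE + 0 = _
  ring

lemma rowQ_rest (q0 q1 q2 : ℝ) (x : AE3 → ℝ) {i : AE3}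
    (h1 : i ≠ aaAE) (h2 : i ≠ bbAE) (h3 : i ≠ ccAE) :
    (filterAE3 q0 q1 q2 *ᵥ x) i = 0 := by
  show ∑ j, filterAE3 q0 q1 q2 i j * x j = _
  apply Finset.sum_eq_zero
  intro j _
  have h1' : i.val ≠ ((1:Fin 4),(3:Fin 4)) := fun h => h1 (Subtype.ext h)
  have h2' : i.val ≠ ((3:Fin 4),(1:Fin 4)) := fun h => h2 (Subtype.ext h)
  have h3' : i.val ≠ ((2:Fin 4),(2:Fin 4)) := fun h => h3 (Subtype.ext h)
  simp [filterAE3, h1', h2', h3']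

/-- The full quadratic form. -/
lemma quad_form (q0 q1 q2 : ℝ) (x : AE3 → ℝ) :
    x ⬝ᵥ ((massAE3 + filterAE3 q0 q1 q2) *ᵥ x) =
      (∑ i ∈ restAE, ddAE i * x i ^ 2) +
      ((4/21 + q0) * x aaAE ^ 2 + 2 * q2 * x aaAE * x bbAE + (4/21 + q0) * x bbAE ^ 2) +
      (4/25 + q1) * x ccAE ^ 2 := by
  rw [Matrix.add_mulVec, dotProduct_add]
  have hm : x ⬝ᵥ (massAE3 *ᵥ x) = ∑ i, ddAE i * x i ^ 2 := by
    rw [massAE3_eq]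
    simp only [dotProduct, mulVec_diagonal]
    exact Finset.sum_congr rfl fun i _ => by ring
  have hq : x ⬝ᵥ (filterAE3 q0 q1 q2 *ᵥ x) =
      q0 * x aaAE ^ 2 + 2 * q2 * x aaAE * x bbAE + q0 * x bbAE ^ 2 + q1 * x ccAE ^ 2 := by
    show ∑ i, x i * (filterAE3 q0 q1 q2 *ᵥ x) i = _
    rw [sum_split3]
    have hrest : ∑ i ∈ restAE, x i * (filterAE3 q0 q1 q2 *ᵥ x) i = 0 := by
      apply Finset.sum_eq_zero
      intro i hi
      obtain ⟨h1, h2, h3⟩ := mem_restAE hi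
      rw [rowQ_rest q0 q1 q2 x h1 h2 h3, mul_zero]
    rw [rowQ_aa, rowQ_bb, rowQ_cc, hrest]
    ring
  rw [hm, hq, sum_split3 (fun i => ddAE i * x i ^ 2), ddAE_aa, ddAE_bb, ddAE_cc]
  ring

set_option maxHeartbeats 1000000 in
/-- For the degree-3 approximate Euclidean order basis, `M + Q` is positive definite iff
`21 q0 > -4`, `25 q1 > -4`, and `21 q0 (21 q0 + 8) - 441 q2² + 16 > 0`. -/
theorem stmt_6 (q0 q1 q2 : ℝ) :
    (massAE3 + filterAE3 q0 q1 q2).PosDef ↔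
      21 * q0 > -4 ∧ 25 * q1 > -4 ∧
      21 * q0 * (21 * q0 + 8) - 441 * q2 ^ 2 + 16 > 0 := by
  constructor
  · intro h
    have hpd := (Matrix.posDef_iff_dotProduct_mulVec.mp h).2
    -- test vector supported on aa, bb, cc
    have key : ∀ t s u : ℝ, ¬ (t = 0 ∧ s = 0 ∧ u = 0) →
        0 < (4/21 + q0) * t ^ 2 + 2 * q2 * t * s + (4/21 + q0) * s ^ 2 + (4/25 + q1) * u ^ 2 := by
      intro t s u htsu
      set x : AE3 → ℝ := fun i => if i = aaAE then t else if i = bbAE then s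
        else if i = ccAE then u else 0 with hx
      have hxa : x aaAE = t := by simp [hx]
      have hxb : x bbAE = s := by
        have : bbAE ≠ aaAE := by decide
        simp [hx, this]
      have hxc : x ccAE = u := by
        have h1 : ccAE ≠ aaAE := by decide
        have h2 : ccAE ≠ bbAE := by decide
        simp [hx, h1, h2]
      have hxne : x ≠ 0 := by
        intro h0
        apply htsu
        refine ⟨?_, ?_, ?_⟩
        · rw [← hxa, h0]; rfl
        · rw [← hxb, h0]; rfl
        · rw [← hxc, h0]; rfl
      have := hpd (x := x) hxne
      rw [show star x = x from rfl, quad_form] at this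
      have hrest : ∑ i ∈ restAE, ddAE i * x i ^ 2 = 0 := by
        apply Finset.sum_eq_zero
        intro i hi
        obtain ⟨h1, h2, h3⟩ := mem_restAE hi
        have : x i = 0 := by simp [hx, h1, h2, h3]
        rw [this]; ring
      rw [hrest, hxa, hxb, hxc] at this
      linarith
    have h0 : 21 * q0 > -4 := by
      have := key 1 0 0 (by norm_num)
      nlinarith
    have h1 : 25 * q1 > -4 := by
      have := key 0 0 1 (by norm_num)
      nlinarith
    refine ⟨h0, h1, ?_⟩
    have hα : (0:ℝ) < 4/21 + q0 := by linarith
    have hk := key (-q2) (4/21 + q0) 0 (by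
      intro h
      exact absurd h.2.1 (ne_of_gt hα))
    have h4 : q2 ^ 2 < (4/21 + q0) ^ 2 := by nlinarith [hk, hα, sq_nonneg q2]
    nlinarith [h4]
  · rintro ⟨h0, h1, h2⟩
    have hα : (0:ℝ) < 4/21 + q0 := by linarith
    have hγ : (0:ℝ) < 4/25 + q1 := by linarith
    have hdet : q2 ^ 2 < (4/21 + q0) ^ 2 := by nlinarith
    rw [Matrix.posDef_iff_dotProduct_mulVec]
    constructor
    · -- Hermitian
      show (massAE3 + filterAE3 q0 q1 q2)ᴴ = _
      rw [conjTranspose_add]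
      congr 1
      · rw [massAE3_eq]
        exact (Matrix.isHermitian_diagonal_iff.mpr fun i => (IsSelfAdjoint.all _)).eq
      · ext i j
        show (starRingEnd ℝ) (filterAE3 q0 q1 q2 j i) = filterAE3 q0 q1 q2 i j
        rw [starRingEnd_apply, star_trivial]
        unfold filterAE3
        have e1 : ((j.val = ((1:Fin 4), (3:Fin 4)) ∧ i.val = (1, 3)) ∨
            (j.val = (3, 1) ∧ i.val = (3, 1)))
            = ((i.val = (1, 3) ∧ j.val = (1, 3)) ∨ (i.val = (3, 1) ∧ j.val = (3, 1))) := by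
          apply propext; tauto
        have e2 : ((j.val = ((1:Fin 4), (3:Fin 4)) ∧ i.val = (3, 1)) ∨
            (j.val = (3, 1) ∧ i.val = (1, 3)))
            = ((i.val = (1, 3) ∧ j.val = (3, 1)) ∨ (i.val = (3, 1) ∧ j.val = (1, 3))) := by
          apply propext; tauto
        have e3 : (j.val = ((2:Fin 4), (2:Fin 4)) ∧ i.val = (2, 2))
            = (i.val = (2, 2) ∧ j.val = (2, 2)) := by
          apply propext; tauto
        simp only [e1, e2, e3]
    · intro x hx
      rw [show star x = x from rfl, quad_form]
      -- decompose
      have hrest_nonneg : 0 ≤ ∑ i ∈ restAE, ddAE i * x i ^ 2 :=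
        Finset.sum_nonneg fun i _ => mul_nonneg (ddAE_pos i).le (sq_nonneg _)
      have hblock_nonneg : 0 ≤ (4/21 + q0) * x aaAE ^ 2 + 2 * q2 * x aaAE * x bbAE +
          (4/21 + q0) * x bbAE ^ 2 := by
        nlinarith [sq_nonneg ((4/21 + q0) * x aaAE + q2 * x bbAE),
          mul_nonneg (sub_pos.mpr hdet).le (sq_nonneg (x bbAE)), hα]
      have hcc_nonneg : 0 ≤ (4/25 + q1) * x ccAE ^ 2 := by positivity
      obtain ⟨i, hi⟩ := Function.ne_iff.mp hx
      simp only [Pi.zero_apply] at hi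
      by_cases hia : i = aaAE
      · rw [hia] at hi
        have ht2 : 0 < x aaAE ^ 2 := by positivity
        have hb : 0 < (4/21 + q0) * x aaAE ^ 2 + 2 * q2 * x aaAE * x bbAE +
            (4/21 + q0) * x bbAE ^ 2 := by
          nlinarith [sq_nonneg ((4/21 + q0) * x bbAE + q2 * x aaAE),
            mul_pos (sub_pos.mpr hdet) ht2, hα]
        linarith
      · by_cases hib : i = bbAE
        · rw [hib] at hi
          have ht2 : 0 < x bbAE ^ 2 := by positivity
          have hb : 0 < (4/21 + q0) * x aaAE ^ 2 + 2 * q2 * x aaAE * x bbAE +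
              (4/21 + q0) * x bbAE ^ 2 := by
            nlinarith [sq_nonneg ((4/21 + q0) * x aaAE + q2 * x bbAE),
              mul_pos (sub_pos.mpr hdet) ht2, hα]
          linarith
        · by_cases hic : i = ccAE
          · rw [hic] at hi
            have hb : 0 < (4/25 + q1) * x ccAE ^ 2 := by positivity
            linarith
          · have hmem : i ∈ restAE := by
              simp only [restAE, Finset.mem_erase]
              exact ⟨hic, hib, hia, Finset.mem_univ _⟩
            have hb : 0 < ∑ i ∈ restAE, ddAE i * x i ^ 2 :=
              Finset.sum_pos' (fun j _ => mul_nonneg (ddAE_pos j).le (sq_nonneg _))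
                ⟨i, hmem, mul_pos (ddAE_pos i) (by positivity)⟩
            linarith
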